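/- Let (V, L, s, t) be a connected lattice and A an additive commutative group. A configuration q : V → A lies in the image of the divergence map ∇ : (L → A) → (V → A) if and only if ∑_{v ∈ V} q v = 0. (This expresses that on a closed connected lattice the Gauss law map is surjective onto exactly the globally neutral vertex charge configurations.) -/
import Mathlib

open Finset

/-- The divergence map of a lattice: `(∇ k) v` is the sum of `k` over links
with source `v` minus the sum of `k` over links with target `v`. -/
def divergence {V L : Type*} [Fintype L] [DecidableEq V] {A : Type*} [AddCommGroup A]
    (s t : L → V) (k : L → A) : V → A :=
  fun v => (∑ ℓ ∈ univ.filter fun ℓ => s ℓ = v, k ℓ) -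
    ∑ ℓ ∈ univ.filter fun ℓ => t ℓ = v, k ℓ

/-- The simple graph on the vertices of a lattice: two distinct vertices are adjacent
whenever some link has them as its source and target (in either order). -/
def latticeGraph {V L : Type*} (s t : L → V) : SimpleGraph V :=
  SimpleGraph.fromRel fun v w => ∃ ℓ, s ℓ = v ∧ t ℓ = w

section Aux

variable {V L : Type*} [Fintype L] [DecidableEq V] {A : Type*} [AddCommGroup A]

/-- Divergence as an additive group hom. -/
def divHom (s t : L → V) : (L → A) →+ (V → A) :=
  AddMonoidHom.mk' (divergence s t) (by
    intro k1 k2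
    funext v
    simp [divergence, Finset.sum_add_distrib]
    abel)

lemma divHom_apply (s t : L → V) (k : L → A) :
    divHom (A := A) s t k = divergence s t k := rfl

/-- A single charge `a` at vertex `v`. -/
def pulse (v : V) (a : A) : V → A := fun u => if u = v then a else 0

lemma div_indicator [DecidableEq L] (s t : L → V) (ℓ : L) (a : A) :
    divergence s t (fun ℓ' => if ℓ' = ℓ then a else 0)
      = pulse (s ℓ) a - pulse (t ℓ) a := by
  funext v
  simp only [divergence, pulse, Pi.sub_apply]
  rw [Finset.sum_ite_eq' , Finset.sum_ite_eq']
  simp only [Finset.mem_filter, Finset.mem_univ, true_and]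
  have e1 : (v = s ℓ) ↔ (s ℓ = v) := eq_comm
  have e2 : (v = t ℓ) ↔ (t ℓ = v) := eq_comm
  by_cases h1 : s ℓ = v <;> by_cases h2 : t ℓ = v <;>
    simp [e1, e2, h1, h2]

lemma pulse_sub_mem_of_adj (s t : L → V) {v w : V}
    (h : (latticeGraph s t).Adj v w) (a : A) :
    pulse v a - pulse w a ∈ (divHom (A := A) s t).range := by
  classical
  rcases h with ⟨hne, h | h⟩
  · rcases h with ⟨ℓ, h1, h2⟩
    exact ⟨fun ℓ' => if ℓ' = ℓ then a else 0, by rw [divHom_apply, div_indicator, h1, h2]⟩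
  · rcases h with ⟨ℓ, h1, h2⟩
    have : pulse w a - pulse v a ∈ (divHom (A := A) s t).range :=
      ⟨fun ℓ' => if ℓ' = ℓ then a else 0, by rw [divHom_apply, div_indicator, h1, h2]⟩
    have := neg_mem this
    simpa using this

lemma pulse_sub_mem_of_reachable (s t : L → V) {v w : V}
    (h : (latticeGraph s t).Reachable v w) (a : A) :
    pulse v a - pulse w a ∈ (divHom (A := A) s t).range := by
  classical
  obtain ⟨p⟩ := h
  induction p with
  | nil =>
    simp only [sub_self]
    exact zero_mem _
  | cons hadj p ih =>
    have h1 := pulse_sub_mem_of_adj s t hadj a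
    have h2 := add_mem h1 ih
    rwa [sub_add_sub_cancel] at h2

end Aux

/-- On a connected closed lattice, a vertex charge configuration `q` lies in the image of
the divergence (Gauss law) map if and only if it is globally neutral: `∑ v, q v = 0`. -/
theorem divergence_surjective_iff_neutral
    {V L : Type*} [Fintype V] [Fintype L] [DecidableEq V]
    (s t : L → V)
    (hconn : Nonempty V ∧ (latticeGraph s t).Connected)
    {A : Type*} [AddCommGroup A] (q : V → A) :
    (∃ k : L → A, divergence s t k = q) ↔ ∑ v, q v = 0 := by
  classical
  constructor
  · rintro ⟨k, rfl⟩
    simp only [divergence]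
    rw [Finset.sum_sub_distrib, Finset.sum_fiberwise, Finset.sum_fiberwise, sub_self]
  · intro hq
    obtain ⟨v0⟩ := hconn.1
    have key : ∀ v a, pulse v a - pulse v0 a ∈ (divHom (A := A) s t).range :=
      fun v a => pulse_sub_mem_of_reachable s t (hconn.2 v v0) a
    have hmem : q ∈ (divHom (A := A) s t).range := by
      have : q = ∑ w, (pulse w (q w) - pulse v0 (q w)) := by
        funext u
        simp only [Finset.sum_apply, Pi.sub_apply, pulse, Finset.sum_sub_distrib]
        by_cases hu : u = v0 <;> simp [hu, hq, Finset.sum_ite_eq]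
      rw [this]
      exact sum_mem fun w _ => key w (q w)
    exact hmem
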